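/- Let L > 0 and C > 0. For every integer n ≥ 1 there exists a constant c = c(n, L, C) > 0 such that for every continuous v₀ : [0,L] → ℝ with sup_{[0,L]} |v₀| ≤ C and every n-th Dirichlet eigenfunction φ of S = −d²/ds² + v₀ (a nonzero φ ∈ C²([0,L]) with −φ″ + v₀φ = μφ on (0,L), φ(0) = φ(L) = 0, and exactly n−1 zeros in (0,L)) normalized by ∫₀^L φ(s)² ds = 1, one has |φ(s)| ≥ c · dist(s, Z) for all s ∈ [0,L], where Z := {s ∈ [0,L] : φ(s) = 0}. -/

import Mathlib

open MeasureTheory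
open Set

/-- `φ` is an `n`-th Dirichlet eigenfunction of `S = -d²/ds² + v` on `(0, L)` with
eigenvalue `μ`: a nonzero `C²` function solving `-φ'' + vφ = μφ` on `(0,L)`, vanishing at
`0` and `L`, and having exactly `n - 1` zeros in the open interval `(0, L)`. -/
def IsDirichletEF (L : ℝ) (v : ℝ → ℝ) (n : ℕ) (μ : ℝ) (φ : ℝ → ℝ) : Prop :=
  ContDiff ℝ 2 φ ∧ (∃ s ∈ Set.Icc (0:ℝ) L, φ s ≠ 0) ∧
  (∀ s ∈ Set.Ioo (0:ℝ) L, -(deriv (deriv φ) s) + v s * φ s = μ * φ s) ∧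
  φ 0 = 0 ∧ φ L = 0 ∧
  {s ∈ Set.Ioo (0:ℝ) L | φ s = 0}.Finite ∧
  {s ∈ Set.Ioo (0:ℝ) L | φ s = 0}.ncard = n - 1


lemma sign_const {φ : ℝ → ℝ} (hφ : Continuous φ) {a b : ℝ}
    (hne : ∀ t ∈ Set.Ioo a b, φ t ≠ 0) :
    (∀ t ∈ Set.Ioo a b, 0 < φ t) ∨ (∀ t ∈ Set.Ioo a b, φ t < 0) := by
  by_cases h : ∀ t ∈ Set.Ioo a b, 0 < φ t
  · exact Or.inl h
  push_neg at h
  obtain ⟨y, hy, hy0⟩ := h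
  have hyneg : φ y < 0 := lt_of_le_of_ne hy0 (hne y hy)
  right
  intro t ht
  rcases lt_or_ge (φ t) 0 with h' | h'
  · exact h'
  exfalso
  have htpos : 0 < φ t := lt_of_le_of_ne h' (Ne.symm (hne t ht))
  have h0 : (0:ℝ) ∈ uIcc (φ y) (φ t) := by
    rw [Set.mem_uIcc]; left; exact ⟨hyneg.le, htpos.le⟩
  obtain ⟨z, hz, hz0⟩ := intermediate_value_uIcc hφ.continuousOn h0
  exact hne z ((Set.ordConnected_Ioo).uIcc_subset hy ht hz) hz0



lemma exists_gap {Z : Set ℝ} (hfin : Z.Finite) {L : ℝ} {n : ℕ} (hn : 1 ≤ n) (hL : 0 < L)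
    (hsub : Z ⊆ Set.Icc 0 L) (h0 : (0:ℝ) ∈ Z) (hLm : L ∈ Z) (hcard : Z.ncard = n + 1) :
    ∃ a ∈ Z, ∃ b ∈ Z, a < b ∧ L / n ≤ b - a ∧ ∀ t ∈ Set.Ioo a b, t ∉ Z := by
  classical
  set F := hfin.toFinset with hF
  have hc : F.card = n + 1 := by
    rw [Set.ncard_eq_toFinset_card _ hfin] at hcard; exact hcard
  let e := F.orderIsoOfFin hc
  set z : Fin (n+1) → ℝ := fun i => (e i : ℝ) with hz
  have zmono : StrictMono z := fun i j hij => by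
    exact_mod_cast (e.lt_iff_lt.mpr hij)
  have zmem : ∀ i, z i ∈ Z := fun i => hfin.mem_toFinset.mp (e i).2
  have zsurj : ∀ x ∈ Z, ∃ i, z i = x := by
    intro x hx
    refine ⟨e.symm ⟨x, hfin.mem_toFinset.mpr hx⟩, ?_⟩
    simp [hz]
  have z0 : z 0 = 0 := by
    obtain ⟨j, hj⟩ := zsurj 0 h0
    have h1 : z 0 ≤ z j := zmono.monotone (Fin.zero_le j)
    have h2 : 0 ≤ z 0 := (hsub (zmem 0)).1
    rw [hj] at h1; linarith
  have zlast : z (Fin.last n) = L := by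
    obtain ⟨j, hj⟩ := zsurj L hLm
    have h1 : z j ≤ z (Fin.last n) := zmono.monotone (Fin.le_last j)
    have h2 : z (Fin.last n) ≤ L := (hsub (zmem _)).2
    rw [hj] at h1; linarith
  set f : ℕ → ℝ := fun i => z ⟨min i n, by omega⟩ with hf
  have hsum : ∑ i ∈ Finset.range n, (f (i+1) - f i) = L := by
    rw [Finset.sum_range_sub f n]
    have h1 : f n = L := by
      rw [hf]; simp only [min_self]; exact zlast
    have h2 : f 0 = 0 := by
      rw [hf]; simp only [Nat.zero_min]; exact z0
    rw [h1, h2, sub_zero]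
  have hex : ∃ i, i < n ∧ L / n ≤ f (i+1) - f i := by
    by_contra hcon
    push_neg at hcon
    have : ∑ i ∈ Finset.range n, (f (i+1) - f i) < ∑ i ∈ Finset.range n, (L / n : ℝ) := by
      apply Finset.sum_lt_sum_of_nonempty
      · exact Finset.nonempty_range_iff.mpr (by omega)
      · intro i hi; exact hcon i (Finset.mem_range.mp hi)
    rw [hsum, Finset.sum_const, Finset.card_range, nsmul_eq_mul] at this
    rw [mul_div_cancel₀] at this
    · exact lt_irrefl _ this
    · exact_mod_cast (by omega : n ≠ 0)
  obtain ⟨i, hi, hgap⟩ := hex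
  refine ⟨f i, zmem _, f (i+1), zmem _, ?_, hgap, ?_⟩
  · have : 0 < L / n := div_pos hL (by exact_mod_cast (by omega : 0 < n))
    linarith
  · intro t ht htZ
    obtain ⟨j, hj⟩ := zsurj t htZ
    have h1 : (⟨min i n, by omega⟩ : Fin (n+1)) < j := by
      rw [← zmono.lt_iff_lt, hj]; exact ht.1
    have h2 : j < (⟨min (i+1) n, by omega⟩ : Fin (n+1)) := by
      rw [← zmono.lt_iff_lt, hj]; exact ht.2
    rw [Fin.lt_def] at h1 h2
    simp only [Fin.val_mk] at h1 h2
    omega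



lemma sturm_bound {φ q : ℝ → ℝ} {a b : ℝ} (hab : a < b)
    (hφd : Differentiable ℝ φ) (hφ'd : Differentiable ℝ (deriv φ))
    (hode : ∀ t ∈ Set.Ioo a b, deriv (deriv φ) t = q t * φ t)
    (hq : ∀ t ∈ Set.Ioo a b, q t < -(Real.pi / (b - a))^2)
    (hpos : ∀ t ∈ Set.Ioo a b, 0 < φ t)
    (ha : φ a = 0) (hb : φ b = 0) : False := by
  set k : ℝ := Real.pi / (b - a) with hk
  have hkpos : 0 < k := div_pos Real.pi_pos (by linarith)
  set W : ℝ → ℝ := fun t => φ t * (k * Real.cos (k * (t - a))) - deriv φ t * Real.sin (k * (t - a)) with hW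
  have hsin : ∀ t : ℝ, HasDerivAt (fun u => Real.sin (k * (u - a))) (Real.cos (k * (t - a)) * k) t := by
    intro t
    have h1 : HasDerivAt (fun u : ℝ => k * (u - a)) k t := by
      simpa using (((hasDerivAt_id t).sub_const a).const_mul k)
    exact (Real.hasDerivAt_sin _).comp t h1
  have hcos : ∀ t : ℝ, HasDerivAt (fun u => Real.cos (k * (u - a))) (-Real.sin (k * (t - a)) * k) t := by
    intro t
    have h1 : HasDerivAt (fun u : ℝ => k * (u - a)) k t := by
      simpa using (((hasDerivAt_id t).sub_const a).const_mul k)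
    exact (Real.hasDerivAt_cos _).comp t h1
  have hWd : ∀ t : ℝ, HasDerivAt W
      (deriv φ t * (k * Real.cos (k * (t - a))) + φ t * (k * (-Real.sin (k * (t - a)) * k))
        - (deriv (deriv φ) t * Real.sin (k * (t - a)) + deriv φ t * (Real.cos (k * (t - a)) * k))) t := by
    intro t
    exact (((hφd t).hasDerivAt.mul ((hcos t).const_mul k)).sub
      (((hφ'd t).hasDerivAt.mul (hsin t))))
  have hWmono : StrictMonoOn W (Set.Icc a b) := by
    apply strictMonoOn_of_deriv_pos (convex_Icc a b)
    · apply Continuous.continuousOn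
      exact continuous_iff_continuousAt.2 fun t => (hWd t).continuousAt
    · intro t ht
      rw [interior_Icc] at ht
      rw [(hWd t).deriv, hode t ht]
      have hsinpos : 0 < Real.sin (k * (t - a)) := by
        apply Real.sin_pos_of_pos_of_lt_pi
        · exact mul_pos hkpos (by linarith [ht.1])
        · have : k * (t - a) < k * (b - a) := by
            apply mul_lt_mul_of_pos_left _ hkpos
            linarith [ht.2]
          rw [hk] at this
          rwa [div_mul_cancel₀] at this
          linarith
      have hqt := hq t ht
      have hφt := hpos t ht
      have : deriv φ t * (k * Real.cos (k * (t - a))) + φ t * (k * (-Real.sin (k * (t - a)) * k))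
        - (q t * φ t * Real.sin (k * (t - a)) + deriv φ t * (Real.cos (k * (t - a)) * k))
        = (-(k^2) - q t) * (φ t * Real.sin (k * (t - a))) := by ring
      rw [this]
      apply mul_pos
      · linarith
      · exact mul_pos hφt hsinpos
  have hWa : W a = 0 := by
    simp [hW, ha]
  have hWb : W b = 0 := by
    have : k * (b - a) = Real.pi := by
      rw [hk]; rw [div_mul_cancel₀ _ (by linarith : b - a ≠ 0)]
    simp [hW, hb, this, Real.sin_pi]
  have := hWmono (Set.left_mem_Icc.mpr hab.le) (Set.right_mem_Icc.mpr hab.le) hab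
  rw [hWa, hWb] at this
  exact lt_irrefl 0 this

lemma no_convex {φ q : ℝ → ℝ} {a b : ℝ} (hab : a < b)
    (hφd : Differentiable ℝ φ)
    (hode : ∀ t ∈ Set.Ioo a b, deriv (deriv φ) t = q t * φ t)
    (hq : ∀ t ∈ Set.Ioo a b, 0 < q t)
    (hpos : ∀ t ∈ Set.Ioo a b, 0 < φ t)
    (ha : φ a = 0) (hb : φ b = 0) : False := by
  have hconv : StrictConvexOn ℝ (Set.Icc a b) φ := by
    apply strictConvexOn_of_deriv2_pos (convex_Icc a b) hφd.continuous.continuousOn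
    intro t ht
    rw [interior_Icc] at ht
    have : deriv^[2] φ t = deriv (deriv φ) t := by
      simp [Function.iterate_succ, Function.iterate_one]
    rw [this, hode t ht]
    exact mul_pos (hq t ht) (hpos t ht)
  have hmid : φ ((1/2 : ℝ) • a + (1/2 : ℝ) • b) < (1/2 : ℝ) • φ a + (1/2 : ℝ) • φ b := by
    exact hconv.2 (Set.left_mem_Icc.mpr hab.le) (Set.right_mem_Icc.mpr hab.le) hab.ne
      (by norm_num) (by norm_num) (by norm_num)
  rw [ha, hb] at hmid
  simp only [smul_eq_mul, mul_zero, add_zero] at hmid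
  have hmem : (1/2 : ℝ) * a + (1/2 : ℝ) * b ∈ Set.Ioo a b := by
    constructor <;> [linarith; linarith]
  have := hpos _ hmem
  linarith



lemma neg_derivs (φ : ℝ → ℝ) :
    deriv (deriv (fun t => -φ t)) = fun t => -(deriv (deriv φ) t) := by
  have h1 : deriv (fun t => -φ t) = fun t => -(deriv φ t) := by
    funext t; exact deriv.neg
  rw [h1]
  funext t; exact deriv.neg

lemma mu_bound {L C : ℝ} (hL : 0 < L) {n : ℕ} (hn : 1 ≤ n) {v φ : ℝ → ℝ} {μ : ℝ}
    (hv : ∀ s ∈ Set.Icc (0:ℝ) L, |v s| ≤ C)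
    (hφd : Differentiable ℝ φ) (hφ'd : Differentiable ℝ (deriv φ))
    (hode : ∀ s ∈ Set.Ioo (0:ℝ) L, deriv (deriv φ) s = (v s - μ) * φ s)
    (hz0 : φ 0 = 0) (hzL : φ L = 0)
    (hfin : {s ∈ Set.Ioo (0:ℝ) L | φ s = 0}.Finite)
    (hcard : {s ∈ Set.Ioo (0:ℝ) L | φ s = 0}.ncard = n - 1) :
    |μ| ≤ C + (Real.pi * n / L)^2 := by
  classical
  set Z : Set ℝ := {s ∈ Set.Ioo (0:ℝ) L | φ s = 0} ∪ {0, L} with hZ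
  have hZfin : Z.Finite := hfin.union ((Set.finite_singleton L).insert 0)
  have hZsub : Z ⊆ Set.Icc 0 L := by
    rintro t (⟨ht, -⟩ | ht)
    · exact Set.Ioo_subset_Icc_self ht
    · simp only [Set.mem_insert_iff, Set.mem_singleton_iff] at ht
      rcases ht with h | h <;> subst h <;> constructor <;> linarith
  have hZ0 : (0:ℝ) ∈ Z := Or.inr (Or.inl rfl)
  have hZL : L ∈ Z := Or.inr (Or.inr rfl)
  have hZzero : ∀ t ∈ Z, φ t = 0 := by
    rintro t (⟨-, ht⟩ | ht)
    · exact ht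
    · simp only [Set.mem_insert_iff, Set.mem_singleton_iff] at ht
      rcases ht with h | h <;> subst h <;> assumption
  have hZcard : Z.ncard = n + 1 := by
    have hdisj : Disjoint {s | s ∈ Set.Ioo (0:ℝ) L ∧ φ s = 0} ({0, L} : Set ℝ) := by
      rw [Set.disjoint_left]
      rintro t ⟨ht, -⟩ h
      simp only [Set.mem_insert_iff, Set.mem_singleton_iff] at h
      rcases h with h | h
      · exact lt_irrefl 0 (h ▸ ht.1)
      · exact lt_irrefl L (h ▸ ht.2)
    rw [hZ, Set.ncard_union_eq hdisj hfin ((Set.finite_singleton L).insert 0)]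
    rw [hcard, Set.ncard_pair (by exact hL.ne : (0:ℝ) ≠ L)]
    omega
  obtain ⟨a, haZ, b, hbZ, hab, hgap, hnoz⟩ := exists_gap hZfin hn hL hZsub hZ0 hZL hZcard
  have habI : Set.Ioo a b ⊆ Set.Ioo 0 L := by
    intro t ht
    exact ⟨lt_of_le_of_lt (hZsub haZ).1 ht.1, lt_of_lt_of_le ht.2 (hZsub hbZ).2⟩
  have hnz : ∀ t ∈ Set.Ioo a b, φ t ≠ 0 := fun t ht h => hnoz t ht (Or.inl ⟨habI ht, h⟩)
  have hodeab : ∀ t ∈ Set.Ioo a b, deriv (deriv φ) t = (v t - μ) * φ t :=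
    fun t ht => hode t (habI ht)
  have hφa : φ a = 0 := hZzero a haZ
  have hφb : φ b = 0 := hZzero b hbZ
  have hnpos : (0:ℝ) < n := by exact_mod_cast (by omega : 0 < n)
  have hLn : (0:ℝ) < L / n := div_pos hL hnpos
  have hsq : (Real.pi / (b - a))^2 ≤ (Real.pi * n / L)^2 := by
    have h1 : Real.pi / (b - a) ≤ Real.pi / (L / n) := by
      apply div_le_div_of_nonneg_left Real.pi_pos.le hLn hgap
    have h2 : Real.pi / (L / n) = Real.pi * n / L := by
      field_simp
    rw [h2] at h1
    apply pow_le_pow_left₀ (div_nonneg Real.pi_pos.le (by linarith)) h1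
  -- negated second derivative facts for the -φ case
  have hψd : Differentiable ℝ (fun t => -φ t) := hφd.neg
  have hψ'd : Differentiable ℝ (deriv (fun t => -φ t)) := by
    have : deriv (fun t => -φ t) = fun t => -(deriv φ t) := funext fun t => deriv.neg
    rw [this]; exact hφ'd.neg
  have hψode : ∀ t ∈ Set.Ioo a b, deriv (deriv (fun t => -φ t)) t = (v t - μ) * (-φ t) := by
    intro t ht
    rw [neg_derivs φ]
    show -(deriv (deriv φ) t) = _
    rw [hodeab t ht]; ring
  rw [abs_le]
  constructor
  · -- lower bound
    by_contra hcon
    push_neg at hcon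
    have hqpos : ∀ t ∈ Set.Ioo a b, 0 < v t - μ := by
      intro t ht
      have hvt := hv t (Set.Ioo_subset_Icc_self (habI ht))
      have := abs_le.mp hvt
      have hsq0 : (0:ℝ) ≤ (Real.pi * n / L)^2 := sq_nonneg _
      linarith
    rcases sign_const hφd.continuous hnz with hp | hm
    · exact no_convex hab hφd hodeab hqpos hp hφa hφb
    · refine no_convex hab hψd hψode hqpos ?_ (by simp [hφa]) (by simp [hφb])
      intro t ht; simpa using hm t ht
  · -- upper bound
    by_contra hcon
    push_neg at hcon
    have hqneg : ∀ t ∈ Set.Ioo a b, v t - μ < -(Real.pi / (b - a))^2 := by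
      intro t ht
      have hvt := hv t (Set.Ioo_subset_Icc_self (habI ht))
      have := abs_le.mp hvt
      linarith
    rcases sign_const hφd.continuous hnz with hp | hm
    · exact sturm_bound hab hφd hφ'd hodeab hqneg hp hφa hφb
    · refine sturm_bound hab hψd hψ'd hψode hqneg ?_ (by simp [hφa]) (by simp [hφb])
      intro t ht; simpa using hm t ht

lemma energy_low {L K : ℝ} (hL : 0 < L) (hK : 1 ≤ K) {q φ : ℝ → ℝ}
    (hφd : Differentiable ℝ φ) (hφ'd : Differentiable ℝ (deriv φ))
    (hq : ∀ t ∈ Set.Ioo (0:ℝ) L, |q t| ≤ K)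
    (hode : ∀ t ∈ Set.Ioo (0:ℝ) L, deriv (deriv φ) t = q t * φ t)
    {x y : ℝ} (hx : x ∈ Set.Icc (0:ℝ) L) (hy : y ∈ Set.Icc (0:ℝ) L) :
    ((deriv φ x)^2 + K*(φ x)^2) * Real.exp (-(2*K)*L) ≤ (deriv φ y)^2 + K*(φ y)^2 := by
  set E : ℝ → ℝ := fun t => (deriv φ t)^2 + K*(φ t)^2 with hE
  set E' : ℝ → ℝ := fun t => 2*deriv φ t*deriv (deriv φ) t + K*(2*φ t*deriv φ t) with hE'
  have hEd : ∀ t : ℝ, HasDerivAt E (E' t) t := by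
    intro t
    have h1 : HasDerivAt (fun u => (deriv φ u)^2) (2*deriv φ t*deriv (deriv φ) t) t := by
      have := ((hφ'd t).hasDerivAt).fun_pow 2
      refine this.congr_deriv ?_; push_cast; ring
    have h2 : HasDerivAt (fun u => K*(φ u)^2) (K*(2*φ t*deriv φ t)) t := by
      have := (((hφd t).hasDerivAt).fun_pow 2).const_mul K
      refine this.congr_deriv ?_; push_cast; ring
    exact h1.add h2
  have hEcont : Continuous E :=
    ((hφ'd.continuous.pow 2).add (continuous_const.mul (hφd.continuous.pow 2)))
  have hEnonneg : ∀ t, 0 ≤ E t := fun t =>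
    add_nonneg (sq_nonneg _) (mul_nonneg (by linarith) (sq_nonneg _))
  have hkey : ∀ t ∈ Set.Ioo (0:ℝ) L, |E' t| ≤ 2*K*E t := by
    intro t ht
    have hqt := abs_le.mp (hq t ht)
    show |2*deriv φ t*deriv (deriv φ) t + K*(2*φ t*deriv φ t)| ≤ 2*K*((deriv φ t)^2 + K*(φ t)^2)
    rw [hode t ht]
    set p := deriv φ t
    set f := φ t
    rw [abs_le]
    constructor
    · nlinarith [mul_nonneg (by linarith : (0:ℝ) ≤ q t + K) (sq_nonneg (p+f)),
        mul_nonneg (by linarith : (0:ℝ) ≤ K - q t) (sq_nonneg (p+f)),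
        mul_nonneg (by linarith : (0:ℝ) ≤ K - 1) (sq_nonneg f),
        mul_nonneg (by linarith : (0:ℝ) ≤ q t + K) (sq_nonneg (p-f))]
    · nlinarith [mul_nonneg (by linarith : (0:ℝ) ≤ q t + K) (sq_nonneg (p-f)),
        mul_nonneg (by linarith : (0:ℝ) ≤ K - q t) (sq_nonneg (p-f)),
        mul_nonneg (by linarith : (0:ℝ) ≤ K - 1) (sq_nonneg f),
        mul_nonneg (by linarith : (0:ℝ) ≤ q t + K) (sq_nonneg (p+f))]
  have hFd : ∀ t : ℝ, HasDerivAt (fun u => E u * Real.exp (2*K*u))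
      (E' t * Real.exp (2*K*t) + E t * (Real.exp (2*K*t) * (2*K))) t := by
    intro t
    simpa using (hEd t).fun_mul (((hasDerivAt_id t).const_mul (2*K)).exp)
  have hGd : ∀ t : ℝ, HasDerivAt (fun u => E u * Real.exp (-(2*K)*u))
      (E' t * Real.exp (-(2*K)*t) + E t * (Real.exp (-(2*K)*t) * (-(2*K)))) t := by
    intro t
    simpa using (hEd t).fun_mul (((hasDerivAt_id t).const_mul (-(2*K))).exp)
  have hmono : MonotoneOn (fun u => E u * Real.exp (2*K*u)) (Set.Icc 0 L) := by
    apply monotoneOn_of_deriv_nonneg (convex_Icc 0 L)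
    · exact (hEcont.mul (Real.continuous_exp.comp (continuous_const.mul continuous_id))).continuousOn
    · intro t ht
      exact ((hFd t).differentiableAt).differentiableWithinAt
    · intro t ht
      rw [interior_Icc] at ht
      rw [(hFd t).deriv]
      have h1 := (abs_le.mp (hkey t ht)).1
      have h2 := (Real.exp_pos (2*K*t)).le
      nlinarith [Real.exp_pos (2*K*t)]
  have hanti : AntitoneOn (fun u => E u * Real.exp (-(2*K)*u)) (Set.Icc 0 L) := by
    apply antitoneOn_of_deriv_nonpos (convex_Icc 0 L)
    · exact (hEcont.mul (Real.continuous_exp.comp (continuous_const.mul continuous_id))).continuousOn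
    · intro t ht
      exact ((hGd t).differentiableAt).differentiableWithinAt
    · intro t ht
      rw [interior_Icc] at ht
      rw [(hGd t).deriv]
      have h1 := (abs_le.mp (hkey t ht)).2
      have h2 := (Real.exp_pos (-(2*K)*t)).le
      nlinarith [Real.exp_pos (-(2*K)*t)]
  rcases le_total x y with hxy | hxy
  · have h := hmono hx hy hxy
    have e1 : Real.exp (-(2*K)*L) * Real.exp (2*K*y) ≤ Real.exp (2*K*x) := by
      rw [← Real.exp_add]
      apply Real.exp_le_exp.mpr
      nlinarith [hx.1, hy.2, hx.2, hy.1]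
    have h2 : E x * (Real.exp (-(2*K)*L) * Real.exp (2*K*y)) ≤ E x * Real.exp (2*K*x) :=
      mul_le_mul_of_nonneg_left e1 (hEnonneg x)
    have h3 : E x * Real.exp (-(2*K)*L) * Real.exp (2*K*y) ≤ E y * Real.exp (2*K*y) := by
      calc E x * Real.exp (-(2*K)*L) * Real.exp (2*K*y)
          = E x * (Real.exp (-(2*K)*L) * Real.exp (2*K*y)) := by ring
        _ ≤ E x * Real.exp (2*K*x) := h2
        _ ≤ E y * Real.exp (2*K*y) := h
    exact le_of_mul_le_mul_right h3 (Real.exp_pos _)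
  · have h := hanti hy hx hxy
    have e1 : Real.exp (-(2*K)*L) * Real.exp (-(2*K)*y) ≤ Real.exp (-(2*K)*x) := by
      rw [← Real.exp_add]
      apply Real.exp_le_exp.mpr
      nlinarith [hx.1, hy.2, hx.2, hy.1]
    have h3 : E x * Real.exp (-(2*K)*L) * Real.exp (-(2*K)*y) ≤ E y * Real.exp (-(2*K)*y) := by
      calc E x * Real.exp (-(2*K)*L) * Real.exp (-(2*K)*y)
          = E x * (Real.exp (-(2*K)*L) * Real.exp (-(2*K)*y)) := by ring
        _ ≤ E x * Real.exp (-(2*K)*x) := mul_le_mul_of_nonneg_left e1 (hEnonneg x)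
        _ ≤ E y * Real.exp (-(2*K)*y) := h
    exact le_of_mul_le_mul_right h3 (Real.exp_pos _)

lemma taylor_bound {φ : ℝ → ℝ} (hφd : Differentiable ℝ φ) (hφ'd : Differentiable ℝ (deriv φ))
    {D : Set ℝ} (hconv : Convex ℝ D) {B : ℝ}
    (hB : ∀ u ∈ D, |deriv (deriv φ) u| ≤ B)
    {x y : ℝ} (hx : x ∈ D) (hy : y ∈ D) :
    |φ y - φ x - deriv φ x * (y - x)| ≤ B * (y - x)^2 := by
  have habs : ∀ u ∈ Set.uIcc x y, |u - x| ≤ |y - x| := by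
    intro u hu
    rcases Set.mem_uIcc.mp hu with ⟨h1, h2⟩ | ⟨h1, h2⟩ <;>
      · rw [abs_le]
        constructor <;> nlinarith [le_abs_self (y - x), neg_abs_le (y - x)]
  have hlip : ∀ u ∈ D, |deriv φ u - deriv φ x| ≤ B * |u - x| := by
    intro u hu
    have := Convex.norm_image_sub_le_of_norm_deriv_le (f := deriv φ)
      (fun w _ => hφ'd w) (fun w hw => by rw [Real.norm_eq_abs]; exact hB w hw) hconv hx hu
    simpa [Real.norm_eq_abs] using this
  set g : ℝ → ℝ := fun u => φ u - φ x - deriv φ x * (u - x) with hg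
  have hgd : ∀ u : ℝ, HasDerivAt g (deriv φ u - deriv φ x) u := by
    intro u
    have h1 : HasDerivAt (fun w : ℝ => φ x + deriv φ x * (w - x)) (deriv φ x) u := by
      simpa using (((hasDerivAt_id u).sub_const x).const_mul (deriv φ x)).const_add (φ x)
    have := ((hφd u).hasDerivAt).sub h1
    have h2 : (fun w => φ w - (φ x + deriv φ x * (w - x))) = g := by
      funext w; rw [hg]; ring
    exact h2 ▸ this
  have hgdiff : ∀ u : ℝ, DifferentiableAt ℝ g u := fun u => (hgd u).differentiableAt
  set D' : Set ℝ := D ∩ Set.uIcc x y with hD'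
  have hconv' : Convex ℝ D' := hconv.inter (convex_uIcc x y)
  have hxD' : x ∈ D' := ⟨hx, Set.left_mem_uIcc⟩
  have hyD' : y ∈ D' := ⟨hy, Set.right_mem_uIcc⟩
  have hbound : ∀ u ∈ D', ‖deriv g u‖ ≤ B * |y - x| := by
    intro u hu
    rw [(hgd u).deriv, Real.norm_eq_abs]
    calc |deriv φ u - deriv φ x| ≤ B * |u - x| := hlip u hu.1
      _ ≤ B * |y - x| := by
          have hB0 : 0 ≤ B := le_trans (abs_nonneg _) (hB x hx)
          exact mul_le_mul_of_nonneg_left (habs u hu.2) hB0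
  have := Convex.norm_image_sub_le_of_norm_deriv_le (f := g)
    (fun w _ => hgdiff w) hbound hconv' hxD' hyD'
  have hgx : g x = 0 := by rw [hg]; simp
  rw [hgx, sub_zero, Real.norm_eq_abs, Real.norm_eq_abs] at this
  calc |g y| ≤ B * |y - x| * |y - x| := this
    _ = B * (y - x)^2 := by rw [mul_assoc, ← abs_mul, ← sq, abs_of_nonneg (sq_nonneg _)]

set_option maxHeartbeats 2000000 in
theorem stmt4 (L C : ℝ) (hL : 0 < L) (hC : 0 < C) (n : ℕ) (hn : 1 ≤ n) :
    ∃ c > 0, ∀ v : ℝ → ℝ, ContinuousOn v (Set.Icc 0 L) →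
      (∀ s ∈ Set.Icc (0:ℝ) L, |v s| ≤ C) →
      ∀ (μ : ℝ) (φ : ℝ → ℝ), IsDirichletEF L v n μ φ →
        (∫ s in Set.Ioo (0:ℝ) L, (φ s) ^ 2) = 1 →
        ∀ s ∈ Set.Icc (0:ℝ) L,
          c * Metric.infDist s {u | u ∈ Set.Icc (0:ℝ) L ∧ φ u = 0} ≤ |φ s| := by
  set K := 2*C + (Real.pi * n / L)^2 + 1 with hKdef
  clear_value K
  have hK1 : 1 ≤ K := by rw [hKdef]; linarith [sq_nonneg (Real.pi * n / L)]
  have hKpos : 0 < K := lt_of_lt_of_le one_pos hK1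
  set X := Real.exp (-(2*K)*L) with hXdef
  clear_value X
  have hX0 : 0 < X := by rw [hXdef]; exact Real.exp_pos _
  have hX1 : X ≤ 1 := by
    rw [hXdef]
    apply Real.exp_le_one_iff.mpr
    have h1 : 0 ≤ (2*K)*L := mul_nonneg (by linarith) hL.le
    linarith
  set γ := X / (8*(L+1)) with hγdef
  clear_value γ
  have hγ0 : 0 < γ := by rw [hγdef]; positivity
  have hγX : 8 * γ * (L+1) = X := by
    rw [hγdef]
    have h1 : (8:ℝ)*(L+1) ≠ 0 := by positivity
    field_simp
  have hγL0 : 0 ≤ γ * L := mul_nonneg hγ0.le hL.le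
  have h8γL : 8 * (γ * L) ≤ X := by linarith [hγX, hγ0]
  have h8γ : 8 * γ ≤ X := by linarith [hγX, hγL0]
  have hγ1 : γ ≤ 1 := by linarith [h8γ, hX1, hγ0]
  have hsL : 0 < Real.sqrt L := Real.sqrt_pos.mpr hL
  refine ⟨γ / Real.sqrt L, div_pos hγ0 hsL, ?_⟩
  set c := γ / Real.sqrt L with hcdef
  clear_value c
  have hc0 : 0 < c := by rw [hcdef]; exact div_pos hγ0 hsL
  intro v hvcont hv μ φ hEF hnorm s hs
  obtain ⟨hφC2, hφne, hodeEq, hz0, hzL, hfin, hcard⟩ := hEF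
  have hφd : Differentiable ℝ φ := hφC2.differentiable (by norm_num)
  have hφ'd : Differentiable ℝ (deriv φ) := by
    have h2 : ContDiff ℝ (1+1) φ := by norm_num at hφC2 ⊢; exact hφC2
    exact (contDiff_succ_iff_deriv.mp h2).2.2.differentiable (by norm_num)
  have hφ''c : Continuous (deriv (deriv φ)) := by
    have h2 : ContDiff ℝ (1+1) φ := by norm_num at hφC2 ⊢; exact hφC2
    have h3 := (contDiff_succ_iff_deriv.mp h2).2.2
    have h4 : ContDiff ℝ (0+1) (deriv φ) := by norm_num at h3 ⊢; exact h3
    exact (contDiff_succ_iff_deriv.mp h4).2.2.continuous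
  have hode : ∀ t ∈ Set.Ioo (0:ℝ) L, deriv (deriv φ) t = (v t - μ) * φ t := by
    intro t ht
    have h := hodeEq t ht
    linear_combination -h
  have hμ := mu_bound hL hn hv hφd hφ'd hode hz0 hzL hfin hcard
  have hqK : ∀ t ∈ Set.Ioo (0:ℝ) L, |v t - μ| ≤ K := by
    intro t ht
    have h1 := abs_le.mp (hv t (Set.Ioo_subset_Icc_self ht))
    have h2 := abs_le.mp hμ
    rw [abs_le, hKdef]
    constructor <;> [linarith; linarith]
  obtain ⟨s₀, hs₀mem, hs₀max⟩ := isCompact_Icc.exists_isMaxOn (Set.nonempty_Icc.mpr hL.le)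
    ((hφd.continuous.pow 2).continuousOn : ContinuousOn (fun t => (φ t)^2) _)
  set M := |φ s₀| with hMdef
  clear_value M
  have hMb : ∀ y ∈ Set.Icc (0:ℝ) L, |φ y| ≤ M := by
    intro y hy
    have h := hs₀max hy
    calc |φ y| = Real.sqrt ((φ y)^2) := (Real.sqrt_sq_eq_abs _).symm
      _ ≤ Real.sqrt ((φ s₀)^2) := Real.sqrt_le_sqrt h
      _ = M := by rw [hMdef]; exact Real.sqrt_sq_eq_abs _
  have hM0 : 0 < M := by
    obtain ⟨s₁, hs₁, hs₁ne⟩ := hφne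
    exact lt_of_lt_of_le (abs_pos.mpr hs₁ne) (hMb s₁ hs₁)
  have hφs₀ : φ s₀ ≠ 0 := abs_pos.mp (hMdef ▸ hM0)
  have hs₀I : s₀ ∈ Set.Ioo (0:ℝ) L := by
    rcases hs₀mem.1.lt_or_eq with h1 | h1
    · rcases hs₀mem.2.lt_or_eq with h2 | h2
      · exact ⟨h1, h2⟩
      · exact absurd (h2 ▸ hzL) hφs₀
    · exact absurd (h1 ▸ hz0) hφs₀
  have hds₀ : deriv φ s₀ = 0 := by
    have hloc : IsLocalMax (fun t => (φ t)^2) s₀ := hs₀max.isLocalMax (Icc_mem_nhds hs₀I.1 hs₀I.2)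
    have hd := hloc.deriv_eq_zero
    have heq : deriv (fun t => (φ t)^2) s₀ = 2 * φ s₀ * deriv φ s₀ := by
      rw [(((hφd s₀).hasDerivAt).fun_pow 2).deriv]
      push_cast; ring
    rw [heq] at hd
    rcases mul_eq_zero.mp hd with h | h
    · exact absurd (by linarith [mul_eq_zero.mp h] : φ s₀ = 0) hφs₀
    · exact h
  have hM2L : 1 ≤ M^2 * L := by
    have hint : (∫ t in Set.Ioo (0:ℝ) L, (φ t)^2) ≤ ∫ _t in Set.Ioo (0:ℝ) L, M^2 := by
      apply MeasureTheory.setIntegral_mono_on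
      · exact ((hφd.continuous.pow 2).integrableOn_Icc).mono_set Set.Ioo_subset_Icc_self
      · exact integrableOn_const (by rw [Real.volume_Ioo]; exact ENNReal.ofReal_ne_top)
      · exact measurableSet_Ioo
      · intro t ht
        have h := hMb t (Set.Ioo_subset_Icc_self ht)
        calc (φ t)^2 = |φ t|^2 := (sq_abs _).symm
          _ ≤ M^2 := pow_le_pow_left₀ (abs_nonneg _) h 2
    rw [hnorm, MeasureTheory.setIntegral_const, Real.volume_real_Ioo_of_le hL.le, smul_eq_mul,
      sub_zero] at hint
    linarith [hint]
  set ε := K * M^2 * X with hεdef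
  clear_value ε
  have hε0 : 0 < ε := by
    rw [hεdef]; exact mul_pos (mul_pos hKpos (pow_pos hM0 2)) hX0
  have hElow : ∀ y ∈ Set.Icc (0:ℝ) L, ε ≤ (deriv φ y)^2 + K*(φ y)^2 := by
    intro y hy
    have h := energy_low (q := fun t => v t - μ) hL hK1 hφd hφ'd hqK hode hs₀mem hy
    have heq : ((deriv φ s₀)^2 + K*(φ s₀)^2) * Real.exp (-(2*K)*L) = ε := by
      rw [hds₀, hεdef, hMdef, sq_abs, ← hXdef]; ring
    rw [heq] at h
    exact h
  have hφ''b : ∀ y ∈ Set.Icc (0:ℝ) L, |deriv (deriv φ) y| ≤ K*M := by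
    have hsub2 : Set.Ioo (0:ℝ) L ⊆ {y | |deriv (deriv φ) y| ≤ K*M} := by
      intro t ht
      rw [Set.mem_setOf_eq, hode t ht, abs_mul]
      exact mul_le_mul (hqK t ht) (hMb t (Set.Ioo_subset_Icc_self ht)) (abs_nonneg _) hKpos.le
    have hclosed : IsClosed {y | |deriv (deriv φ) y| ≤ K*M} :=
      isClosed_le (hφ''c.abs) continuous_const
    intro y hy
    have hsub3 : Set.Icc (0:ℝ) L ⊆ {y | |deriv (deriv φ) y| ≤ K*M} := by
      rw [← closure_Ioo hL.ne]
      exact closure_minimal hsub2 hclosed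
    exact hsub3 hy
  set Z : Set ℝ := {u | u ∈ Set.Icc (0:ℝ) L ∧ φ u = 0} with hZdef
  set d := Metric.infDist s Z with hddef
  clear_value Z
  clear_value d
  have h0Z : (0:ℝ) ∈ Z := by rw [hZdef]; exact ⟨Set.left_mem_Icc.mpr hL.le, hz0⟩
  have hLZ : L ∈ Z := by rw [hZdef]; exact ⟨Set.right_mem_Icc.mpr hL.le, hzL⟩
  have hd0 : 0 ≤ d := by rw [hddef]; exact Metric.infDist_nonneg
  rcases eq_or_lt_of_le hd0 with hdeq | hdpos
  · rw [← hdeq, mul_zero]; exact abs_nonneg _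
  by_contra hcon
  push_neg at hcon
  have hφs : φ s ≠ 0 := by
    intro h
    have hmem : s ∈ Z := by rw [hZdef]; exact ⟨hs, h⟩
    have h2 := Metric.infDist_le_dist_of_mem (x := s) hmem
    rw [dist_self, ← hddef] at h2
    linarith
  have hds1 : d ≤ s := by
    have h2 := Metric.infDist_le_dist_of_mem (x := s) h0Z
    rwa [Real.dist_eq, sub_zero, abs_of_nonneg hs.1, ← hddef] at h2
  have hds2 : d ≤ L - s := by
    have h2 := Metric.infDist_le_dist_of_mem (x := s) hLZ
    rw [Real.dist_eq, abs_of_nonpos (by linarith [hs.2]), ← hddef] at h2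
    linarith
  have hdL : d ≤ L := by linarith [hs.1]
  have hMsL : 1 ≤ M * Real.sqrt L := by
    have h1 : Real.sqrt 1 ≤ Real.sqrt (M^2*L) := Real.sqrt_le_sqrt hM2L
    rwa [Real.sqrt_one, Real.sqrt_mul (sq_nonneg M), Real.sqrt_sq hM0.le] at h1
  have hcM : c ≤ γ * M := by
    rw [hcdef, div_le_iff₀ hsL]
    linarith [mul_le_mul_of_nonneg_left hMsL hγ0.le]
  have hφs_bound : |φ s| < γ * M * L := by
    have h1 : c * d ≤ c * L := mul_le_mul_of_nonneg_left hdL hc0.le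
    have h2 : c * L ≤ γ * M * L := mul_le_mul_of_nonneg_right hcM hL.le
    linarith
  have hεs := hElow s hs
  have hKφs : K * (φ s)^2 ≤ ε/2 := by
    have h1 : (φ s)^2 ≤ (γ*M*L)^2 := by
      rw [← sq_abs (φ s)]
      exact pow_le_pow_left₀ (abs_nonneg _) hφs_bound.le 2
    have hsq8 : (8*(γ*L))*(8*(γ*L)) ≤ X*X :=
      mul_le_mul h8γL h8γL (by linarith) hX0.le
    have hXX : X*X ≤ X := mul_le_of_le_one_left hX0.le hX1
    have h2 : (γ*L)^2 ≤ X/2 := by linarith [hsq8, hXX]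
    calc K*(φ s)^2 ≤ K*((γ*M*L)^2) := mul_le_mul_of_nonneg_left h1 hKpos.le
      _ = K*M^2*(γ*L)^2 := by ring
      _ ≤ K*M^2*(X/2) := mul_le_mul_of_nonneg_left h2 (mul_nonneg hKpos.le (sq_nonneg M))
      _ = ε/2 := by rw [hεdef]; ring
  have hp2 : ε/2 ≤ (deriv φ s)^2 := by linarith
  have hp0 : deriv φ s ≠ 0 := by
    intro h
    rw [h] at hp2
    norm_num at hp2
    linarith
  set p := deriv φ s with hpdef
  clear_value p
  set t := -2 * φ s / p with htdef
  clear_value t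
  have hpt : p * t = -2 * φ s := by
    rw [htdef, mul_comm, div_mul_cancel₀ _ hp0]
  have ht2p2 : t^2 * p^2 = 4 * (φ s)^2 := by
    rw [htdef]; field_simp; ring
  have ht2d : t^2 < d^2 := by
    have f1 : t^2 * (ε/2) ≤ 4 * (φ s)^2 := by
      have h := mul_le_mul_of_nonneg_left hp2 (sq_nonneg t)
      linarith [ht2p2, h]
    have f2 : (φ s)^2 < (c*d)^2 := by
      rw [← sq_abs (φ s)]
      exact pow_lt_pow_left₀ hcon (abs_nonneg _) (by norm_num)
    have f3 : c*d ≤ γ*M*d := mul_le_mul_of_nonneg_right hcM hd0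
    have f4 : (c*d)^2 ≤ (γ*M*d)^2 := by
      apply pow_le_pow_left₀ (mul_nonneg hc0.le hd0) f3
    have h8γ2 : 8*γ^2 ≤ X := by
      linarith [mul_le_mul_of_nonneg_right h8γ hγ0.le, mul_le_mul_of_nonneg_left hγ1 hX0.le]
    have f5 : 8*(γ*M*d)^2 ≤ ε*d^2 := by
      have hmd : 0 ≤ M^2*d^2 := by positivity
      have h1 : 8*γ^2*(M^2*d^2) ≤ X*(M^2*d^2) := mul_le_mul_of_nonneg_right h8γ2 hmd
      have h2 : X*(M^2*d^2) ≤ K*(X*(M^2*d^2)) := by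
        have h3 : 0 ≤ (K-1)*(X*(M^2*d^2)) :=
          mul_nonneg (by linarith) (mul_nonneg hX0.le hmd)
        linarith
      calc 8*(γ*M*d)^2 = 8*γ^2*(M^2*d^2) := by ring
        _ ≤ X*(M^2*d^2) := h1
        _ ≤ K*(X*(M^2*d^2)) := h2
        _ = ε*d^2 := by rw [hεdef]; ring
    have h6 : t^2*(ε/2) < d^2*(ε/2) := by linarith
    exact lt_of_mul_lt_mul_right h6 (by linarith)
  have htd : |t| < d := by
    have h := Real.sqrt_lt_sqrt (sq_nonneg t) ht2d
    rwa [Real.sqrt_sq_eq_abs, Real.sqrt_sq hdpos.le] at h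
  have hstI : s + t ∈ Set.Icc (0:ℝ) L := by
    constructor
    · have := neg_abs_le t; linarith
    · have := le_abs_self t; linarith
  have hTay := taylor_bound hφd hφ'd (convex_Icc (0:ℝ) L) hφ''b hs hstI
  have hsimp : s + t - s = t := by ring
  rw [hsimp, ← hpdef] at hTay
  set R := φ (s + t) - φ s - p * t with hRdef
  clear_value R
  have hRlt : |R| < |φ s| := by
    have hKM0 : 0 < K*M := mul_pos hKpos hM0
    have g0 : t^2 * (ε/2) ≤ 4 * (φ s)^2 := by
      have h := mul_le_mul_of_nonneg_left hp2 (sq_nonneg t)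
      linarith [ht2p2, h]
    have g1 : (K*M*t^2) * (ε/2) ≤ K*M*(4*(φ s)^2) := by
      linarith [mul_le_mul_of_nonneg_left g0 hKM0.le]
    have g2 : K*M*(4*(φ s)^2) < K*M*(4*(γ*M*L)*|φ s|) := by
      have h1 : (φ s)^2 < γ*M*L*|φ s| := by
        rw [← sq_abs (φ s), sq]
        exact mul_lt_mul_of_pos_right hφs_bound (abs_pos.mpr hφs)
      linarith [mul_lt_mul_of_pos_left h1 (show (0:ℝ) < 4*(K*M) by linarith)]
    have g3 : K*M*(4*(γ*M*L)*|φ s|) ≤ (ε/2)*|φ s| := by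
      have hnn : 0 ≤ K*M^2*|φ s| := mul_nonneg (mul_nonneg hKpos.le (sq_nonneg M)) (abs_nonneg _)
      have h1 := mul_le_mul_of_nonneg_right h8γL hnn
      calc K*M*(4*(γ*M*L)*|φ s|) = (8*(γ*L))*(K*M^2*|φ s|)/2 := by ring
        _ ≤ X*(K*M^2*|φ s|)/2 := by linarith
        _ = (ε/2)*|φ s| := by rw [hεdef]; ring
    have hh : (K*M*t^2) * (ε/2) < |φ s| * (ε/2) := by linarith
    have gKMt : K*M*t^2 < |φ s| := lt_of_mul_lt_mul_right hh (by linarith)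
    linarith
  have hφst : φ (s + t) = R - φ s := by
    rw [hRdef]
    linear_combination hpt
  have hprod : φ (s + t) * φ s < 0 := by
    rw [hφst]
    have h1 : R * φ s ≤ |R| * |φ s| := by
      rw [← abs_mul]; exact le_abs_self _
    have h2 : |R| * |φ s| < |φ s| * |φ s| := mul_lt_mul_of_pos_right hRlt (abs_pos.mpr hφs)
    have h3 : |φ s| * |φ s| = φ s * φ s := abs_mul_abs_self _
    linarith
  have h0mem : (0:ℝ) ∈ Set.uIcc (φ s) (φ (s+t)) := by
    rcases lt_or_ge (φ s) 0 with h | h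
    · rw [Set.mem_uIcc]; left
      refine ⟨h.le, ?_⟩
      by_contra hneg
      push_neg at hneg
      exact absurd hprod (not_lt.mpr (mul_pos_of_neg_of_neg hneg h).le)
    · rw [Set.mem_uIcc]; right
      have hps : 0 < φ s := lt_of_le_of_ne h (Ne.symm hφs)
      refine ⟨?_, h⟩
      by_contra hneg
      push_neg at hneg
      exact absurd hprod (not_lt.mpr (mul_pos hneg hps).le)
  obtain ⟨z, hzmem, hz0'⟩ := intermediate_value_uIcc (hφd.continuous.continuousOn) h0mem
  have hzI : z ∈ Set.Icc (0:ℝ) L := (Set.ordConnected_Icc.uIcc_subset hs hstI) hzmem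
  have hzZ : z ∈ Z := by rw [hZdef]; exact ⟨hzI, hz0'⟩
  have hdist : dist s z ≤ |t| := by
    rw [Real.dist_eq]
    rcases Set.mem_uIcc.mp hzmem with ⟨h1, h2⟩ | ⟨h1, h2⟩ <;>
      · rw [abs_le]
        constructor <;> linarith [le_abs_self t, neg_abs_le t]
  have hfinal : d ≤ |t| := by
    have h := Metric.infDist_le_dist_of_mem (x := s) hzZ
    rw [← hddef] at h
    exact le_trans h hdist
  linarith
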